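/- Let Δ : [0,1] → ℝ be measurable with Δ(u) ≥ Δ* > 0 and satisfying the measure condition with constant C, and let p ∈ (1,2). Suppose u : [0,1] → [0,1] is a C¹ bijection with u' (s) = c_p Δ(u(s))^p where c_p = ∫₀¹ Δ^{−p}. Then the boundary terms satisfy u'(0)/Δ(u(0))² ≤ (Cp/(p−1))·Δ*^{−1} and u'(1)/Δ(u(1))² ≤ (Cp/(p−1))·Δ*^{−1}. -/

import Mathlib

open MeasureTheory Set

/-- Boundary-term bounds for the power-law schedule: `u'(0)/Δ(u(0))² ≤ (Cp/(p−1))Δ*⁻¹`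
and the same at `s = 1`. -/
lemma cp_bound (Δ : ℝ → ℝ) (Δstar C p : ℝ)
    (hmeas : Measurable Δ)
    (hlow : ∀ v ∈ Icc (0:ℝ) 1, Δstar ≤ Δ v)
    (hΔstar : 0 < Δstar) (hC : 0 < C)
    (hmc : ∀ x > (0:ℝ), (volume {v ∈ Icc (0:ℝ) 1 | Δ v ≤ x}).toReal ≤ C * x)
    (hp : p ∈ Ioo (1:ℝ) 2) :
    (∫ v in (0:ℝ)..1, Δ v ^ (-p)) ≤ C * p / (p - 1) * Δstar ^ (1 - p) := by
  have hp1 : (1:ℝ) < p := hp.1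
  have hppos : 0 < p := by linarith
  have hq : (0:ℝ) < 1 - p⁻¹ := by
    have : p⁻¹ < 1 := by rw [inv_lt_one_iff₀]; right; exact hp1
    linarith
  set T : ℝ := Δstar ^ (-p) with hT
  have hTpos : 0 < T := Real.rpow_pos_of_pos hΔstar _
  set μ : Measure ℝ := volume.restrict (Ioc (0:ℝ) 1) with hμ
  set f : ℝ → ℝ := fun v => Δ v ^ (-p) with hf
  have f_mble : Measurable f := by fun_prop
  have f_nn : 0 ≤ᵐ[μ] f :=
    (ae_restrict_iff' measurableSet_Ioc).2 (.of_forall fun v hv =>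
      (Real.rpow_pos_of_pos (lt_of_lt_of_le hΔstar (hlow v ⟨hv.1.le, hv.2⟩)) _).le)
  have hsets : ∀ t : ℝ, MeasurableSet {a | t ≤ f a} := fun t =>
    measurableSet_le measurable_const f_mble
  have h1 : (∫ v in (0:ℝ)..1, f v) = (∫⁻ v, ENNReal.ofReal (f v) ∂μ).toReal := by
    rw [intervalIntegral.integral_of_le zero_le_one,
      integral_eq_lintegral_of_nonneg_ae f_nn f_mble.aestronglyMeasurable.restrict]
  have h2 : (∫⁻ v, ENNReal.ofReal (f v) ∂μ) = ∫⁻ t in Ioi (0:ℝ), μ {a | t ≤ f a} :=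
    lintegral_eq_lintegral_meas_le μ f_nn f_mble.aemeasurable
  -- pointwise bound on superlevel-set measures
  have key : ∀ t ∈ Ioi (0:ℝ), μ {a | t ≤ f a} ≤
      (Ioc (0:ℝ) T).indicator (fun t => ENNReal.ofReal (C * t ^ (-p⁻¹))) t := by
    intro t ht
    have ht0 : (0:ℝ) < t := ht
    by_cases hle : t ≤ T
    · rw [indicator_of_mem (show t ∈ Ioc (0:ℝ) T from ⟨ht0, hle⟩)]
      have hsub : {a | t ≤ f a} ∩ Ioc 0 1 ⊆ {v ∈ Icc (0:ℝ) 1 | Δ v ≤ t ^ (-p⁻¹)} := by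
        rintro a ⟨ha1, ha2⟩
        have hΔa : 0 < Δ a := lt_of_lt_of_le hΔstar (hlow a ⟨ha2.1.le, ha2.2⟩)
        simp only [mem_setOf_eq] at ha1 ⊢
        refine ⟨⟨ha2.1.le, ha2.2⟩, ?_⟩
        have h5 : t ^ p⁻¹ ≤ (Δ a)⁻¹ := by
          have h4 := Real.rpow_le_rpow ht0.le ha1 (by positivity : (0:ℝ) ≤ p⁻¹)
          rwa [hf, ← Real.rpow_mul hΔa.le, neg_mul,
            mul_inv_cancel₀ hppos.ne', Real.rpow_neg_one] at h4
        have h6 := inv_anti₀ (Real.rpow_pos_of_pos ht0 p⁻¹) h5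
        rwa [inv_inv, ← Real.rpow_neg ht0.le] at h6
      calc μ {a | t ≤ f a} = volume ({a | t ≤ f a} ∩ Ioc 0 1) := by
            rw [hμ, Measure.restrict_apply (hsets t)]
        _ ≤ volume {v ∈ Icc (0:ℝ) 1 | Δ v ≤ t ^ (-p⁻¹)} := measure_mono hsub
        _ ≤ ENNReal.ofReal (C * t ^ (-p⁻¹)) := by
            have hx : (0:ℝ) < t ^ (-p⁻¹) := Real.rpow_pos_of_pos ht0 _
            have hfin : volume {v ∈ Icc (0:ℝ) 1 | Δ v ≤ t ^ (-p⁻¹)} ≠ ⊤ :=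
              ((measure_mono (fun v hv => hv.1)).trans_lt (by simp)).ne
            rw [← ENNReal.ofReal_toReal hfin]
            exact ENNReal.ofReal_le_ofReal (hmc _ hx)
    · push_neg at hle
      rw [indicator_of_notMem (fun h => absurd h.2 (not_le.mpr hle))]
      have hempty : {a | t ≤ f a} ∩ Ioc 0 1 = ∅ := by
        ext a
        simp only [mem_inter_iff, mem_setOf_eq, mem_empty_iff_false, iff_false, not_and]
        intro ha1 ha2
        have : f a ≤ T := Real.rpow_le_rpow_of_nonpos hΔstar
          (hlow a ⟨ha2.1.le, ha2.2⟩) (by linarith)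
        linarith
      rw [hμ, Measure.restrict_apply (hsets t), hempty]
      simp
  -- integrate the bound
  have hint : IntegrableOn (fun t : ℝ => C * t ^ (-p⁻¹)) (Ioc 0 T) :=
    ((intervalIntegral.intervalIntegrable_rpow' (by linarith : (-1:ℝ) < -p⁻¹)).const_mul C).1
  have hnn2 : 0 ≤ᵐ[volume.restrict (Ioc (0:ℝ) T)] fun t : ℝ => C * t ^ (-p⁻¹) :=
    (ae_restrict_iff' measurableSet_Ioc).2 (.of_forall fun t ht =>
      mul_nonneg hC.le (Real.rpow_pos_of_pos ht.1 _).le)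
  have h3 : (∫⁻ t in Ioi (0:ℝ), μ {a | t ≤ f a}) ≤
      ENNReal.ofReal (∫ t in Ioc (0:ℝ) T, C * t ^ (-p⁻¹)) := by
    calc (∫⁻ t in Ioi (0:ℝ), μ {a | t ≤ f a})
        ≤ ∫⁻ t in Ioi (0:ℝ), (Ioc (0:ℝ) T).indicator
            (fun t => ENNReal.ofReal (C * t ^ (-p⁻¹))) t :=
          setLIntegral_mono (Measurable.indicator
            (by fun_prop) measurableSet_Ioc) key
      _ ≤ ∫⁻ t, (Ioc (0:ℝ) T).indicator
            (fun t => ENNReal.ofReal (C * t ^ (-p⁻¹))) t := setLIntegral_le_lintegral _ _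
      _ = ∫⁻ t in Ioc (0:ℝ) T, ENNReal.ofReal (C * t ^ (-p⁻¹)) :=
          lintegral_indicator measurableSet_Ioc _
      _ = ENNReal.ofReal (∫ t in Ioc (0:ℝ) T, C * t ^ (-p⁻¹)) :=
          (ofReal_integral_eq_lintegral_ofReal hint hnn2).symm
  have h5 : (∫ t in Ioc (0:ℝ) T, C * t ^ (-p⁻¹)) = C * (T ^ (1 - p⁻¹) / (1 - p⁻¹)) := by
    rw [← intervalIntegral.integral_of_le hTpos.le, intervalIntegral.integral_const_mul,
      integral_rpow (Or.inl (by linarith : (-1:ℝ) < -p⁻¹)),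
      Real.zero_rpow (by intro h; rw [neg_add_eq_sub] at h; linarith), sub_zero,
      neg_add_eq_sub]
  have h6 : T ^ (1 - p⁻¹) = Δstar ^ (1 - p) := by
    rw [hT, ← Real.rpow_mul hΔstar.le]
    congr 1
    field_simp
    ring
  have hfinal : (∫ v in (0:ℝ)..1, f v) ≤ C * (T ^ (1 - p⁻¹) / (1 - p⁻¹)) := by
    rw [h1, h2]
    exact ENNReal.toReal_le_of_le_ofReal (by positivity) (h5 ▸ h3)
  have heq : C * (T ^ (1 - p⁻¹) / (1 - p⁻¹)) = C * p / (p - 1) * Δstar ^ (1 - p) := by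
    rw [h6]
    have hne : p - 1 ≠ 0 := by linarith
    have hne2 : (1:ℝ) - p⁻¹ ≠ 0 := ne_of_gt hq
    field_simp
  calc (∫ v in (0:ℝ)..1, Δ v ^ (-p)) ≤ C * (T ^ (1 - p⁻¹) / (1 - p⁻¹)) := hfinal
    _ = C * p / (p - 1) * Δstar ^ (1 - p) := heq

theorem boundary_terms_bound (Δ : ℝ → ℝ) (Δstar C p : ℝ)
    (hmeas : Measurable Δ)
    (hlow : ∀ v ∈ Icc (0:ℝ) 1, Δstar ≤ Δ v)
    (hΔstar : 0 < Δstar) (hC : 0 < C)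
    (hmc : ∀ x > (0:ℝ), (volume {v ∈ Icc (0:ℝ) 1 | Δ v ≤ x}).toReal ≤ C * x)
    (hp : p ∈ Ioo (1:ℝ) 2)
    (u u' : ℝ → ℝ)
    (hbij : BijOn u (Icc 0 1) (Icc 0 1))
    (hderiv : ∀ s ∈ Icc (0:ℝ) 1, HasDerivAt u (u' s) s)
    (hu'cont : ContinuousOn u' (Icc 0 1))
    (hode : ∀ s ∈ Icc (0:ℝ) 1, u' s = (∫ v in (0:ℝ)..1, Δ v ^ (-p)) * Δ (u s) ^ p) :
    u' 0 / Δ (u 0) ^ 2 ≤ (C * p / (p - 1)) * Δstar⁻¹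
    ∧ u' 1 / Δ (u 1) ^ 2 ≤ (C * p / (p - 1)) * Δstar⁻¹ := by
  have hp1 : (1:ℝ) < p := hp.1
  have hcpB := cp_bound Δ Δstar C p hmeas hlow hΔstar hC hmc hp
  have hcp0 : 0 ≤ ∫ v in (0:ℝ)..1, Δ v ^ (-p) :=
    intervalIntegral.integral_nonneg zero_le_one fun v hv =>
      (Real.rpow_pos_of_pos (lt_of_lt_of_le hΔstar (hlow v hv)) _).le
  have hB0 : 0 ≤ C * p / (p - 1) * Δstar ^ (1 - p) := by
    apply mul_nonneg (div_nonneg (by positivity) (by linarith))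
    positivity
  have main : ∀ s ∈ Icc (0:ℝ) 1,
      u' s / Δ (u s) ^ 2 ≤ C * p / (p - 1) * Δstar⁻¹ := by
    intro s hs
    have hus : u s ∈ Icc (0:ℝ) 1 := hbij.mapsTo hs
    have hΔu : 0 < Δ (u s) := lt_of_lt_of_le hΔstar (hlow _ hus)
    rw [hode s hs]
    have hrw : (∫ v in (0:ℝ)..1, Δ v ^ (-p)) * Δ (u s) ^ p / Δ (u s) ^ 2
        = (∫ v in (0:ℝ)..1, Δ v ^ (-p)) * Δ (u s) ^ (p - 2) := by
      rw [Real.rpow_sub hΔu, show ((2:ℝ)) = ((2:ℕ):ℝ) by norm_num, Real.rpow_natCast]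
      ring
    rw [hrw]
    have h1 : Δ (u s) ^ (p - 2) ≤ Δstar ^ (p - 2) :=
      Real.rpow_le_rpow_of_nonpos hΔstar (hlow _ hus) (by linarith [hp.2])
    have h2 : (∫ v in (0:ℝ)..1, Δ v ^ (-p)) * Δ (u s) ^ (p - 2)
        ≤ (C * p / (p - 1) * Δstar ^ (1 - p)) * Δstar ^ (p - 2) :=
      mul_le_mul hcpB h1 (Real.rpow_pos_of_pos hΔu _).le hB0
    refine h2.trans_eq ?_
    rw [mul_assoc, ← Real.rpow_add hΔstar,
      show (1 - p + (p - 2)) = (-1 : ℝ) by ring, Real.rpow_neg_one]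
  exact ⟨main 0 ⟨le_refl 0, zero_le_one⟩, main 1 ⟨zero_le_one, le_refl 1⟩⟩
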